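/- Let ε ∈ (0, 1/2]. Let X, Y, Z be pairwise disjoint finite sets with |X| = |Y| = |Z|, and let E ⊆ X × Y × Z be a set of hyperedges such that every z ∈ Z has degree d(z) ≥ 1 (d(z) is the number of edges of E containing z). Construct the (1,ε)-restricted allocation instance with agent set A = E, item set B = X ∪ Y ∪ Ẑ where Ẑ = {z^(1), …, z^(d(z)−1) : z ∈ Z} contains d(z) − 1 distinct copies of each z ∈ Z, weights w(j) = ε for j ∈ X ∪ Y and w(j) = 1 for j ∈ Ẑ, and interest sets B_e = {x, y, z^(1), …, z^(d(z)−1)} for each agent e = (x, y, z) ∈ E. Then there exists an allocation in which every agent receives total weight at least 2ε if and only if the hypergraph H(X ∪ Y ∪ Z, E) has a perfect matching (a set M ⊆ E of pairwise disjoint edges covering every node of X ∪ Y ∪ Z). -/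

import Mathlib

open Finset

/-- Index of an element within a finset, used to assign distinct heavy copies. -/
noncomputable def allocIdx {α : Type*} [DecidableEq α] (s : Finset α) (a : α) : ℕ :=
  if h : a ∈ s then (s.equivFin ⟨a, h⟩).val else 0

lemma allocIdx_lt {α : Type*} [DecidableEq α] {s : Finset α} {a : α} (h : a ∈ s) :
    allocIdx s a < s.card := by
  rw [allocIdx, dif_pos h]
  exact (s.equivFin ⟨a, h⟩).isLt

lemma allocIdx_inj {α : Type*} [DecidableEq α] {s : Finset α} {a b : α} (ha : a ∈ s) (hb : b ∈ s)
    (h : allocIdx s a = allocIdx s b) : a = b := by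
  rw [allocIdx, dif_pos ha, allocIdx, dif_pos hb] at h
  have := s.equivFin.injective (Fin.ext h)
  exact Subtype.ext_iff.mp this

/-- **Hardness reduction from 3-dimensional matching.**
For the `(1,ε)`-restricted allocation instance built from a 3-dimensional matching
instance `H(X ∪ Y ∪ Z, E)` (agents are the edges; light items of weight `ε` are the
nodes of `X ∪ Y`; heavy items of weight `1` are `d(z) - 1` copies of each `z ∈ Z`;
the interest set of an edge `(x,y,z)` is `{x, y}` together with all copies of `z`),
there is an allocation giving every agent total weight at least `2ε` iff `H` has a
perfect matching. -/
theorem allocation_iff_three_dimensional_matching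
    {V : Type*} [Fintype V] [DecidableEq V]
    (ε : ℝ) (hε0 : 0 < ε) (hε : ε ≤ 1 / 2)
    (X Y Z : Finset V)
    (hXY : Disjoint X Y) (hXZ : Disjoint X Z) (hYZ : Disjoint Y Z)
    (hXYcard : X.card = Y.card) (hYZcard : Y.card = Z.card)
    (E : Finset (V × V × V))
    (hE : ∀ e ∈ E, e.1 ∈ X ∧ e.2.1 ∈ Y ∧ e.2.2 ∈ Z)
    (d : V → ℕ) (hd : ∀ z, d z = (E.filter (fun e => e.2.2 = z)).card)
    (hdeg : ∀ z ∈ Z, 1 ≤ d z)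
    (w : V ⊕ (V × ℕ) → ℝ)
    (hwl : ∀ v, w (Sum.inl v) = ε) (hwh : ∀ p, w (Sum.inr p) = 1)
    (Be : V × V × V → Finset (V ⊕ (V × ℕ)))
    (hBe : ∀ e ∈ E, Be e = {Sum.inl e.1, Sum.inl e.2.1} ∪
      (Finset.range (d e.2.2 - 1)).image (fun t => Sum.inr (e.2.2, t))) :
    (∃ S : V × V × V → Finset (V ⊕ (V × ℕ)),
      (∀ e ∈ E, S e ⊆ Be e) ∧
      (∀ e ∈ E, ∀ f ∈ E, e ≠ f → Disjoint (S e) (S f)) ∧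
      (∀ e ∈ E, 2 * ε ≤ ∑ j ∈ S e, w j)) ↔
    (∃ M ⊆ E,
      (∀ e ∈ M, ∀ f ∈ M, e ≠ f →
        e.1 ≠ f.1 ∧ e.2.1 ≠ f.2.1 ∧ e.2.2 ≠ f.2.2) ∧
      (∀ v ∈ X, ∃ e ∈ M, e.1 = v) ∧
      (∀ v ∈ Y, ∃ e ∈ M, e.2.1 = v) ∧
      (∀ v ∈ Z, ∃ e ∈ M, e.2.2 = v)) := by
  classical
  have wnn : ∀ j, 0 ≤ w j := by
    rintro (v | p)
    · rw [hwl]; linarith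
    · rw [hwh]; norm_num
  constructor
  · rintro ⟨S, hsub, hdisj, hval⟩
    -- For every z ∈ Z there is an edge that receives both of its light items.
    have key : ∀ z ∈ Z, ∃ e ∈ E, e.2.2 = z ∧ Sum.inl e.1 ∈ S e ∧ Sum.inl e.2.1 ∈ S e := by
      intro z hz
      by_contra hcon
      push_neg at hcon
      have hheavy : ∀ e ∈ E, e.2.2 = z →
          ∃ t ∈ Finset.range (d z - 1), Sum.inr (z, t) ∈ S e := by
        intro e heE hez
        by_contra hne
        push_neg at hne
        have hub : S e ⊆ {Sum.inl e.1, Sum.inl e.2.1} := by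
          intro j hj
          have hjB := hsub e heE hj
          rw [hBe e heE] at hjB
          rcases Finset.mem_union.mp hjB with h | h
          · exact h
          · obtain ⟨t, ht, rfl⟩ := Finset.mem_image.mp h
            rw [hez] at ht hj
            exact absurd hj (hne t ht)
        have hsum := hval e heE
        have hone : ∃ a, S e ⊆ {a} ∧ w a = ε := by
          by_cases h1 : Sum.inl e.1 ∈ S e
          · refine ⟨Sum.inl e.1, ?_, hwl _⟩
            intro j hj
            rcases Finset.mem_insert.mp (hub hj) with h | h
            · simpa [h]
            · rw [Finset.mem_singleton] at h
              exact absurd (h ▸ hj) (hcon e heE hez h1)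
          · refine ⟨Sum.inl e.2.1, ?_, hwl _⟩
            intro j hj
            rcases Finset.mem_insert.mp (hub hj) with h | h
            · exact absurd (h ▸ hj) h1
            · simpa [h]
        obtain ⟨a, hSa, hwa⟩ := hone
        have hle : ∑ j ∈ S e, w j ≤ ∑ j ∈ ({a} : Finset (V ⊕ (V × ℕ))), w j :=
          Finset.sum_le_sum_of_subset_of_nonneg hSa (fun j _ _ => wnn j)
        rw [Finset.sum_singleton, hwa] at hle
        linarith
      have hheavy' : ∀ e, ∃ t, (e ∈ E ∧ e.2.2 = z) →
          t ∈ Finset.range (d z - 1) ∧ Sum.inr (z, t) ∈ S e := by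
        intro e
        by_cases h : e ∈ E ∧ e.2.2 = z
        · obtain ⟨t, ht, hts⟩ := hheavy e h.1 h.2
          exact ⟨t, fun _ => ⟨ht, hts⟩⟩
        · exact ⟨0, fun h' => absurd h' h⟩
      choose τ hτ using hheavy'
      have hinj : Set.InjOn τ ↑(E.filter (fun e => e.2.2 = z)) := by
        intro e he f hf heq
        by_contra hne
        have he' := Finset.mem_filter.mp (Finset.mem_coe.mp he)
        have hf' := Finset.mem_filter.mp (Finset.mem_coe.mp hf)
        have h1 := (hτ e he').2
        have h2 := (hτ f hf').2
        rw [heq] at h1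
        exact Finset.disjoint_left.mp (hdisj e he'.1 f hf'.1 hne) h1 h2
      have hcard := Finset.card_le_card_of_injOn τ
        (fun e he => (hτ e (Finset.mem_filter.mp he)).1) hinj
      rw [Finset.card_range, ← hd z] at hcard
      have := hdeg z hz
      omega
    have key' : ∀ z, ∃ e, z ∈ Z →
        e ∈ E ∧ e.2.2 = z ∧ Sum.inl e.1 ∈ S e ∧ Sum.inl e.2.1 ∈ S e := by
      intro z
      by_cases hz : z ∈ Z
      · obtain ⟨e, he, h⟩ := key z hz
        exact ⟨e, fun _ => ⟨he, h⟩⟩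
      · exact ⟨(z, z, z), fun h => absurd h hz⟩
    choose g hg using key'
    set M : Finset (V × V × V) := Z.image g with hM
    have hMsub : M ⊆ E := by
      intro e he
      obtain ⟨z, hz, rfl⟩ := Finset.mem_image.mp he
      exact (hg z hz).1
    have hpair : ∀ e ∈ M, ∀ f ∈ M, e ≠ f →
        e.1 ≠ f.1 ∧ e.2.1 ≠ f.2.1 ∧ e.2.2 ≠ f.2.2 := by
      rintro e he f hf hne
      obtain ⟨z, hz, rfl⟩ := Finset.mem_image.mp he
      obtain ⟨z', hz', rfl⟩ := Finset.mem_image.mp hf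
      obtain ⟨heE, he22, hl1, hl2⟩ := hg z hz
      obtain ⟨hfE, hf22, hl1', hl2'⟩ := hg z' hz'
      have hdSS := hdisj _ heE _ hfE hne
      refine ⟨?_, ?_, ?_⟩
      · intro h
        exact Finset.disjoint_left.mp hdSS hl1 (by rw [h]; exact hl1')
      · intro h
        exact Finset.disjoint_left.mp hdSS hl2 (by rw [h]; exact hl2')
      · intro h
        apply hne
        rw [he22, hf22] at h
        rw [h]
    have hMZ : ∀ v ∈ Z, ∃ e ∈ M, e.2.2 = v := by
      intro z hz
      exact ⟨g z, Finset.mem_image_of_mem g hz, (hg z hz).2.1⟩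
    have hMcard : M.card = Z.card := by
      rw [hM]
      apply Finset.card_image_of_injOn
      intro z hz z' hz' hgz
      have h1 := (hg z (Finset.mem_coe.mp hz)).2.1
      rw [hgz, (hg z' (Finset.mem_coe.mp hz')).2.1] at h1
      exact h1.symm
    have hXcov : ∀ v ∈ X, ∃ e ∈ M, e.1 = v := by
      have hsubX : M.image (fun e => e.1) ⊆ X := by
        intro v hv
        obtain ⟨e, he, rfl⟩ := Finset.mem_image.mp hv
        exact (hE e (hMsub he)).1
      have hinj1 : Set.InjOn (fun e : V × V × V => e.1) ↑M := by
        intro e he f hf h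
        by_contra hne
        exact (hpair e (Finset.mem_coe.mp he) f (Finset.mem_coe.mp hf) hne).1 h
      have hcardim : (M.image (fun e => e.1)).card = X.card := by
        rw [Finset.card_image_of_injOn hinj1, hMcard, ← hYZcard, ← hXYcard]
      have hEq : M.image (fun e => e.1) = X :=
        Finset.eq_of_subset_of_card_le hsubX hcardim.ge
      intro v hv
      rw [← hEq] at hv
      obtain ⟨e, he, h⟩ := Finset.mem_image.mp hv
      exact ⟨e, he, h⟩
    have hYcov : ∀ v ∈ Y, ∃ e ∈ M, e.2.1 = v := by
      have hsubY : M.image (fun e => e.2.1) ⊆ Y := by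
        intro v hv
        obtain ⟨e, he, rfl⟩ := Finset.mem_image.mp hv
        exact (hE e (hMsub he)).2.1
      have hinj1 : Set.InjOn (fun e : V × V × V => e.2.1) ↑M := by
        intro e he f hf h
        by_contra hne
        exact (hpair e (Finset.mem_coe.mp he) f (Finset.mem_coe.mp hf) hne).2.1 h
      have hcardim : (M.image (fun e => e.2.1)).card = Y.card := by
        rw [Finset.card_image_of_injOn hinj1, hMcard, ← hYZcard]
      have hEq : M.image (fun e => e.2.1) = Y :=
        Finset.eq_of_subset_of_card_le hsubY hcardim.ge
      intro v hv
      rw [← hEq] at hv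
      obtain ⟨e, he, h⟩ := Finset.mem_image.mp hv
      exact ⟨e, he, h⟩
    exact ⟨M, hMsub, hpair, hXcov, hYcov, hMZ⟩
  · rintro ⟨M, hME, hpw, hXc, hYc, hZc⟩
    -- edges outside the matching with third coordinate z
    have hFcard : ∀ z ∈ Z,
        (E.filter (fun e => e.2.2 = z ∧ e ∉ M)).card ≤ d z - 1 := by
      intro z hz
      obtain ⟨e₀, he₀M, he₀z⟩ := hZc z hz
      have hsub : E.filter (fun e => e.2.2 = z ∧ e ∉ M) ⊆
          E.filter (fun e => e.2.2 = z) := by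
        intro e he
        rw [Finset.mem_filter] at he ⊢
        exact ⟨he.1, he.2.1⟩
      have hss : E.filter (fun e => e.2.2 = z ∧ e ∉ M) ⊂
          E.filter (fun e => e.2.2 = z) := by
        refine (Finset.ssubset_iff_of_subset hsub).mpr ⟨e₀, ?_, ?_⟩
        · exact Finset.mem_filter.mpr ⟨hME he₀M, he₀z⟩
        · intro h
          exact (Finset.mem_filter.mp h).2.2 he₀M
      have h1 := Finset.card_lt_card hss
      rw [← hd z] at h1
      omega
    refine ⟨fun e => if e ∈ M then ({Sum.inl e.1, Sum.inl e.2.1} : Finset (V ⊕ (V × ℕ)))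
      else {Sum.inr (e.2.2, allocIdx (E.filter (fun f => f.2.2 = e.2.2 ∧ f ∉ M)) e)},
      ?_, ?_, ?_⟩
    · intro e heE
      dsimp only
      rw [hBe e heE]
      by_cases heM : e ∈ M
      · rw [if_pos heM]
        exact Finset.subset_union_left
      · rw [if_neg heM]
        intro j hj
        rw [Finset.mem_singleton] at hj
        subst hj
        apply Finset.mem_union_right
        apply Finset.mem_image.mpr
        refine ⟨_, ?_, rfl⟩
        rw [Finset.mem_range]
        have heF : e ∈ E.filter (fun f => f.2.2 = e.2.2 ∧ f ∉ M) :=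
          Finset.mem_filter.mpr ⟨heE, rfl, heM⟩
        have hlt := allocIdx_lt heF
        have := hFcard e.2.2 (hE e heE).2.2
        omega
    · intro e heE f hfE hne
      dsimp only
      by_cases heM : e ∈ M <;> by_cases hfM : f ∈ M
      · rw [if_pos heM, if_pos hfM]
        obtain ⟨h1, h2, _⟩ := hpw e heM f hfM hne
        rw [Finset.disjoint_left]
        intro j hj hj'
        rcases Finset.mem_insert.mp hj with h | h <;>
          rcases Finset.mem_insert.mp hj' with h' | h'
        · rw [h] at h'
          exact h1 (Sum.inl.inj h')
        · rw [Finset.mem_singleton] at h'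
          rw [h] at h'
          have := Sum.inl.inj h'
          exact Finset.disjoint_left.mp hXY (hE e heE).1 (this ▸ (hE f hfE).2.1)
        · rw [Finset.mem_singleton] at h
          rw [h] at h'
          have := Sum.inl.inj h'
          exact Finset.disjoint_left.mp hXY (hE f hfE).1 (this ▸ (hE e heE).2.1)
        · rw [Finset.mem_singleton] at h h'
          rw [h] at h'
          exact h2 (Sum.inl.inj h')
      · rw [if_pos heM, if_neg hfM, Finset.disjoint_left]
        intro j hj hj'
        rw [Finset.mem_singleton] at hj'
        rcases Finset.mem_insert.mp hj with h | h
        · rw [h] at hj'; exact Sum.inl_ne_inr hj'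
        · rw [Finset.mem_singleton] at h; rw [h] at hj'; exact Sum.inl_ne_inr hj'
      · rw [if_neg heM, if_pos hfM, Finset.disjoint_left]
        intro j hj hj'
        rw [Finset.mem_singleton] at hj
        rcases Finset.mem_insert.mp hj' with h | h
        · rw [hj] at h; exact Sum.inr_ne_inl h
        · rw [Finset.mem_singleton] at h; rw [hj] at h; exact Sum.inr_ne_inl h
      · rw [if_neg heM, if_neg hfM, Finset.disjoint_singleton]
        intro heq
        have hpq := Prod.mk.injEq _ _ _ _ ▸ (Sum.inr.inj heq)
        have h22 : e.2.2 = f.2.2 := hpq.1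
        have hidx := hpq.2
        have hFeq : E.filter (fun g => g.2.2 = e.2.2 ∧ g ∉ M) =
            E.filter (fun g => g.2.2 = f.2.2 ∧ g ∉ M) := by rw [h22]
        rw [hFeq] at hidx
        have heF : e ∈ E.filter (fun g => g.2.2 = f.2.2 ∧ g ∉ M) :=
          Finset.mem_filter.mpr ⟨heE, h22, heM⟩
        have hfF : f ∈ E.filter (fun g => g.2.2 = f.2.2 ∧ g ∉ M) :=
          Finset.mem_filter.mpr ⟨hfE, rfl, hfM⟩
        exact hne (allocIdx_inj heF hfF hidx)
    · intro e heE
      dsimp only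
      by_cases heM : e ∈ M
      · rw [if_pos heM]
        have hne : (Sum.inl e.1 : V ⊕ (V × ℕ)) ≠ Sum.inl e.2.1 := by
          intro h
          exact Finset.disjoint_left.mp hXY (hE e heE).1
            ((Sum.inl.inj h) ▸ (hE e heE).2.1)
        rw [Finset.sum_pair hne, hwl, hwl]
        linarith
      · rw [if_neg heM, Finset.sum_singleton, hwh]
        linarith
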